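/- Let 0 < q < 1 and let X have q-density f with f(q^{-j}) ≥ C q^{j(j+1)/2} for all j ≥ 0 (C > 0) and all q-moments finite. Then there exists a q-density g with g(q^{j}) ≠ f(q^{j}) for some j ∈ ℤ, yet ∑_{j∈ℤ} q^{j(k+1)} g(q^j) = ∑_{j∈ℤ} q^{j(k+1)} f(q^j) for all k ∈ ℕ₀. -/

import Mathlib

open Finset Function Filter

/-- Coefficients of the q-exponential-type series used for the perturbation. -/
noncomputable def aseq (q : ℝ) : ℕ → ℝ
  | 0 => 1
  | n + 1 => aseq q n * (-(q ^ n) / (1 - q ^ (n + 1)))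

/-- Partial q-Pochhammer product. -/
noncomputable def Pq (q : ℝ) (n : ℕ) : ℝ := ∏ i ∈ Finset.range n, (1 - q ^ (i + 1))

/-- The series function F(z) = ∑ aseq n z^n. -/
noncomputable def Fq (q : ℝ) (z : ℝ) : ℝ := ∑' n : ℕ, aseq q n * z ^ n

lemma one_sub_pow_pos {q : ℝ} (hq0 : 0 < q) (hq1 : q < 1) (n : ℕ) :
    0 < 1 - q ^ (n + 1) := by
  have : q ^ (n + 1) < 1 := pow_lt_one₀ hq0.le hq1 (Nat.succ_ne_zero n)
  linarith

lemma aseq_rec {q : ℝ} (hq0 : 0 < q) (hq1 : q < 1) (n : ℕ) :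
    aseq q (n + 1) * (1 - q ^ (n + 1)) = -(q ^ n) * aseq q n := by
  have h : (1 : ℝ) - q ^ (n + 1) ≠ 0 := (one_sub_pow_pos hq0 hq1 n).ne'
  show (aseq q n * (-(q ^ n) / (1 - q ^ (n + 1)))) * (1 - q ^ (n + 1)) = _
  rw [mul_assoc, div_mul_cancel₀ _ h]
  ring

lemma aseq_summable {q : ℝ} (hq0 : 0 < q) (hq1 : q < 1) (z : ℝ) :
    Summable (fun n : ℕ => aseq q n * z ^ n) := by
  have h1q : (0 : ℝ) < 1 - q := by linarith
  apply summable_of_ratio_norm_eventually_le (r := 1 / 2) (by norm_num)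
  have ht : Tendsto (fun n : ℕ => q ^ n * (|z| / (1 - q))) atTop (nhds 0) := by
    simpa using (tendsto_pow_atTop_nhds_zero_of_lt_one hq0.le hq1).mul_const (|z| / (1 - q))
  filter_upwards [ht.eventually_le_const (by norm_num : (0 : ℝ) < 1 / 2)] with n hn
  have hden : (0 : ℝ) < 1 - q ^ (n + 1) := one_sub_pow_pos hq0 hq1 n
  have hfac : aseq q (n + 1) * z ^ (n + 1) =
      (aseq q n * z ^ n) * (-(q ^ n) / (1 - q ^ (n + 1)) * z) := by
    show (aseq q n * (-(q ^ n) / (1 - q ^ (n + 1)))) * z ^ (n + 1) = _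
    ring
  rw [hfac, norm_mul]
  have hbound : ‖-(q ^ n) / (1 - q ^ (n + 1)) * z‖ ≤ 1 / 2 := by
    rw [norm_mul, norm_div, norm_neg]
    have hqn : ‖q ^ n‖ = q ^ n := by
      rw [Real.norm_eq_abs, abs_of_nonneg (pow_nonneg hq0.le n)]
    have hd : ‖(1 : ℝ) - q ^ (n + 1)‖ = 1 - q ^ (n + 1) := by
      rw [Real.norm_eq_abs, abs_of_pos hden]
    rw [hqn, hd, Real.norm_eq_abs]
    have h1 : q ^ n / (1 - q ^ (n + 1)) * |z| ≤ q ^ n / (1 - q) * |z| := by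
      apply mul_le_mul_of_nonneg_right _ (abs_nonneg z)
      apply div_le_div_of_nonneg_left (pow_nonneg hq0.le n) h1q
      have : q ^ (n + 1) ≤ q := by
        calc q ^ (n + 1) ≤ q ^ 1 := pow_le_pow_of_le_one hq0.le hq1.le (by omega)
        _ = q := pow_one q
      linarith
    calc q ^ n / (1 - q ^ (n + 1)) * |z| ≤ q ^ n / (1 - q) * |z| := h1
      _ = q ^ n * (|z| / (1 - q)) := by ring
      _ ≤ 1 / 2 := hn
  calc ‖aseq q n * z ^ n‖ * ‖-(q ^ n) / (1 - q ^ (n + 1)) * z‖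
      ≤ ‖aseq q n * z ^ n‖ * (1 / 2) := by
        exact mul_le_mul_of_nonneg_left hbound (norm_nonneg _)
    _ = 1 / 2 * ‖aseq q n * z ^ n‖ := by ring

lemma Fq_feq {q : ℝ} (hq0 : 0 < q) (hq1 : q < 1) (z : ℝ) :
    Fq q z = (1 - z) * Fq q (q * z) := by
  set u : ℕ → ℝ := fun n => aseq q n * z ^ n with hu_def
  set v : ℕ → ℝ := fun n => aseq q n * (q * z) ^ n with hv_def
  have hu : Summable u := aseq_summable hq0 hq1 z
  have hv : Summable v := aseq_summable hq0 hq1 (q * z)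
  have hv1 : Summable (fun n => v (n + 1)) := by
    exact_mod_cast (summable_nat_add_iff 1).2 hv
  have hvz : Summable (fun n => z * v n) := hv.mul_left z
  have key : ∀ n : ℕ, u (n + 1) = v (n + 1) - z * v n := by
    intro n
    simp only [hu_def, hv_def, mul_pow]
    have h := aseq_rec hq0 hq1 n
    have hrec : aseq q (n + 1) = aseq q (n + 1) * q ^ (n + 1) - q ^ n * aseq q n := by
      linear_combination h
    calc aseq q (n + 1) * z ^ (n + 1)
        = (aseq q (n + 1) * q ^ (n + 1) - q ^ n * aseq q n) * z ^ (n + 1) := by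
          rw [← hrec]
      _ = aseq q (n + 1) * (q ^ (n + 1) * z ^ (n + 1))
            - z * (aseq q n * (q ^ n * z ^ n)) := by ring
  have hFv : Fq q (q * z) = ∑' n, v n := rfl
  calc Fq q z = ∑' n, u n := rfl
    _ = u 0 + ∑' n, u (n + 1) := Summable.tsum_eq_zero_add hu
    _ = v 0 + ∑' n, (v (n + 1) - z * v n) := by
        have h0 : u 0 = v 0 := by simp [hu_def, hv_def]
        rw [h0, tsum_congr key]
    _ = v 0 + (∑' n, v (n + 1) - ∑' n, z * v n) := by rw [Summable.tsum_sub hv1 hvz]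
    _ = (v 0 + ∑' n, v (n + 1)) - z * ∑' n, v n := by rw [tsum_mul_left]; ring
    _ = ∑' n, v n - z * ∑' n, v n := by rw [← Summable.tsum_eq_zero_add hv]
    _ = (1 - z) * Fq q (q * z) := by rw [hFv]; ring

lemma Fq_zero {q : ℝ} (hq0 : 0 < q) (hq1 : q < 1) (k : ℕ) :
    Fq q ((q : ℝ) ^ (-(k : ℤ))) = 0 := by
  induction k with
  | zero =>
      have h := Fq_feq hq0 hq1 1
      simpa using h
  | succ k ih =>
      have h := Fq_feq hq0 hq1 ((q : ℝ) ^ (-((k : ℤ) + 1)))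
      have harg : q * (q : ℝ) ^ (-((k : ℤ) + 1)) = (q : ℝ) ^ (-(k : ℤ)) := by
        have h2 := zpow_add₀ hq0.ne' (1 : ℤ) (-((k : ℤ) + 1))
        rw [zpow_one] at h2
        rw [← h2]
        congr 1
        ring
      rw [harg, ih, mul_zero] at h
      rw [show (-((k : ℕ) + 1 : ℕ) : ℤ) = -((k : ℤ) + 1) by push_cast; ring]
      exact h
lemma Pq_pos {q : ℝ} (hq0 : 0 < q) (hq1 : q < 1) (n : ℕ) : 0 < Pq q n :=
  Finset.prod_pos fun i _ => one_sub_pow_pos hq0 hq1 i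

lemma Pq_ge {q : ℝ} (hq0 : 0 < q) (hq1 : q < 1) (n : ℕ) :
    Real.exp (-(q / (1 - q) ^ 2)) ≤ Pq q n := by
  have h1q : (0 : ℝ) < 1 - q := by linarith
  have hpos := Pq_pos hq0 hq1 n
  rw [← Real.exp_log hpos, Real.exp_le_exp]
  rw [Pq, Real.log_prod (fun i _ => (one_sub_pow_pos hq0 hq1 i).ne')]
  have hterm : ∀ i ∈ Finset.range n,
      -(q ^ (i + 1) / (1 - q)) ≤ Real.log (1 - q ^ (i + 1)) := by
    intro i _
    have hx0 : (0 : ℝ) < 1 - q ^ (i + 1) := one_sub_pow_pos hq0 hq1 i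
    have hlog := Real.log_le_sub_one_of_pos (inv_pos.2 hx0)
    rw [Real.log_inv] at hlog
    have h2 : (1 - q ^ (i + 1))⁻¹ - 1 = q ^ (i + 1) / (1 - q ^ (i + 1)) := by
      field_simp
      ring
    have h3 : q ^ (i + 1) / (1 - q ^ (i + 1)) ≤ q ^ (i + 1) / (1 - q) := by
      apply div_le_div_of_nonneg_left (pow_nonneg hq0.le _) h1q
      have : q ^ (i + 1) ≤ q := by
        calc q ^ (i + 1) ≤ q ^ 1 := pow_le_pow_of_le_one hq0.le hq1.le (by omega)
          _ = q := pow_one q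
      linarith
    rw [h2] at hlog
    linarith
  have hsum : -(q / (1 - q) ^ 2) ≤ ∑ i ∈ Finset.range n, -(q ^ (i + 1) / (1 - q)) := by
    have hgeom : ∑ i ∈ Finset.range n, q ^ i ≤ (1 - q)⁻¹ := by
      rw [geom_sum_eq hq1.ne n]
      have hq' : q - 1 < 0 := by linarith
      rw [div_le_iff_of_neg hq']
      have hqn : 0 ≤ q ^ n := pow_nonneg hq0.le n
      have hinv : (1 - q)⁻¹ * (q - 1) = -1 := by field_simp; ring
      rw [hinv]
      linarith
    have : ∑ i ∈ Finset.range n, -(q ^ (i + 1) / (1 - q))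
        = -(q * (∑ i ∈ Finset.range n, q ^ i) / (1 - q)) := by
      rw [Finset.sum_neg_distrib]
      congr 1
      rw [Finset.mul_sum, Finset.sum_div]
      apply Finset.sum_congr rfl
      intro i _
      rw [pow_succ']
    rw [this, neg_le_neg_iff]
    calc q * (∑ i ∈ Finset.range n, q ^ i) / (1 - q)
        ≤ q * (1 - q)⁻¹ / (1 - q) := by
          gcongr
      _ = q / (1 - q) ^ 2 := by
          rw [sq]
          field_simp
  exact hsum.trans (Finset.sum_le_sum hterm)

lemma aseq_abs_mul_Pq {q : ℝ} (hq0 : 0 < q) (hq1 : q < 1) (n : ℕ) :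
    |aseq q n| * Pq q n = q ^ (∑ i ∈ Finset.range n, i) := by
  induction n with
  | zero => simp [aseq, Pq]
  | succ n ih =>
      have hden : (0 : ℝ) < 1 - q ^ (n + 1) := one_sub_pow_pos hq0 hq1 n
      have habs : |aseq q (n + 1)| = |aseq q n| * (q ^ n / (1 - q ^ (n + 1))) := by
        show |aseq q n * (-(q ^ n) / (1 - q ^ (n + 1)))| = _
        rw [abs_mul, abs_div, abs_neg, abs_of_nonneg (pow_nonneg hq0.le n),
          abs_of_pos hden]
      have hPq : Pq q (n + 1) = Pq q n * (1 - q ^ (n + 1)) := by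
        rw [Pq, Pq, Finset.prod_range_succ]
      rw [habs, hPq, Finset.sum_range_succ]
      calc |aseq q n| * (q ^ n / (1 - q ^ (n + 1))) * (Pq q n * (1 - q ^ (n + 1)))
          = |aseq q n| * Pq q n * q ^ n * ((1 - q ^ (n + 1)) / (1 - q ^ (n + 1))) := by
            ring
        _ = |aseq q n| * Pq q n * q ^ n := by rw [div_self hden.ne']; ring
        _ = q ^ (∑ i ∈ Finset.range n, i) * q ^ n := by rw [ih]
        _ = q ^ (∑ i ∈ Finset.range n, i + n) := by rw [pow_add]

lemma sum_range_id_succ (n : ℕ) : ∑ i ∈ Finset.range (n + 1), i = n * (n + 1) / 2 := by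
  have h := Finset.sum_range_id_mul_two (n + 1)
  have h2 : (n + 1) * (n + 1 - 1) = n * (n + 1) := by
    simp [Nat.succ_sub_one]
    ring
  obtain ⟨r, hr⟩ := Nat.even_mul_succ_self n
  omega
open scoped Classical in
/-- The perturbation, supported on the points q^{-n}, n ∈ ℕ. -/
noncomputable def pert (q ε : ℝ) (t : ℝ) : ℝ :=
  if h : ∃ n : ℕ, t = q ^ (-(n : ℤ)) then ε * (aseq q h.choose * q ^ h.choose) else 0

lemma zpow_inj' {q : ℝ} (hq0 : 0 < q) (hq1 : q < 1) {m n : ℤ}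
    (h : (q : ℝ) ^ m = q ^ n) : m = n := by
  have hl := congrArg Real.log h
  rw [Real.log_zpow, Real.log_zpow] at hl
  have hlq : Real.log q ≠ 0 := (Real.log_neg hq0 hq1).ne
  exact_mod_cast mul_right_cancel₀ hlq hl

lemma pert_val {q : ℝ} (hq0 : 0 < q) (hq1 : q < 1) (ε : ℝ) (n : ℕ) :
    pert q ε ((q : ℝ) ^ (-(n : ℤ))) = ε * (aseq q n * q ^ n) := by
  have hex : ∃ m : ℕ, (q : ℝ) ^ (-(n : ℤ)) = q ^ (-(m : ℤ)) := ⟨n, rfl⟩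
  rw [pert, dif_pos hex]
  have hspec := hex.choose_spec
  have hn : hex.choose = n := by
    have := zpow_inj' hq0 hq1 hspec
    omega
  rw [hn]

lemma pert_zero {q : ℝ} (hq0 : 0 < q) (hq1 : q < 1) (ε : ℝ) (j : ℤ)
    (hj : ∀ n : ℕ, j ≠ -(n : ℤ)) : pert q ε ((q : ℝ) ^ j) = 0 := by
  rw [pert]
  apply dif_neg
  rintro ⟨n, hn⟩
  exact hj n (zpow_inj' hq0 hq1 hn)

lemma pert_moment {q : ℝ} (hq0 : 0 < q) (hq1 : q < 1) (ε : ℝ) (k : ℕ) :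
    Summable (fun j : ℤ => (q : ℝ) ^ (j * ((k : ℤ) + 1)) * pert q ε (q ^ j)) ∧
    ∑' j : ℤ, (q : ℝ) ^ (j * ((k : ℤ) + 1)) * pert q ε (q ^ j) = 0 := by
  set M : ℤ → ℝ := fun j => (q : ℝ) ^ (j * ((k : ℤ) + 1)) * pert q ε (q ^ j) with hM
  have hemb : Function.Injective (fun n : ℕ => -(n : ℤ)) := by
    intro a b h
    simp only at h
    omega
  have hzero : ∀ j : ℤ, j ∉ Set.range (fun n : ℕ => -(n : ℤ)) → M j = 0 := by
    intro j hj
    have hne : ∀ n : ℕ, j ≠ -(n : ℤ) := fun n hn => hj ⟨n, hn.symm⟩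
    show (q : ℝ) ^ (j * ((k : ℤ) + 1)) * pert q ε (q ^ j) = 0
    rw [pert_zero hq0 hq1 ε j hne, mul_zero]
  have hcomp : ∀ n : ℕ,
      M (-(n : ℤ)) = ε * (aseq q n * ((q : ℝ) ^ (-(k : ℤ))) ^ n) := by
    intro n
    show (q : ℝ) ^ ((-(n : ℤ)) * ((k : ℤ) + 1)) * pert q ε (q ^ (-(n : ℤ)))
        = ε * (aseq q n * ((q : ℝ) ^ (-(k : ℤ))) ^ n)
    rw [pert_val hq0 hq1 ε n]
    have hz : (q : ℝ) ^ ((-(n : ℤ)) * ((k : ℤ) + 1)) * (q : ℝ) ^ (n : ℤ)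
        = (q : ℝ) ^ ((-(k : ℤ)) * (n : ℤ)) := by
      rw [← zpow_add₀ hq0.ne']
      congr 1
      ring
    calc (q : ℝ) ^ ((-(n : ℤ)) * ((k : ℤ) + 1)) * (ε * (aseq q n * q ^ n))
        = ε * (aseq q n * ((q : ℝ) ^ ((-(n : ℤ)) * ((k : ℤ) + 1)) * (q : ℝ) ^ (n : ℤ))) := by
          rw [← zpow_natCast q n]
          ring
      _ = ε * (aseq q n * (q : ℝ) ^ ((-(k : ℤ)) * (n : ℤ))) := by rw [hz]
      _ = ε * (aseq q n * ((q : ℝ) ^ (-(k : ℤ))) ^ n) := by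
          rw [zpow_mul, zpow_natCast]
  have hsumc : Summable (fun n : ℕ => M (-(n : ℤ))) := by
    refine ((aseq_summable hq0 hq1 ((q : ℝ) ^ (-(k : ℤ)))).mul_left ε).congr ?_
    intro n
    rw [hcomp n]
  have hsum : Summable M := (Function.Injective.summable_iff hemb hzero).1 hsumc
  refine ⟨hsum, ?_⟩
  have hsupp : Function.support M ⊆ Set.range (fun n : ℕ => -(n : ℤ)) := by
    intro j hj
    by_contra h
    exact hj (hzero j h)
  have ht := Function.Injective.tsum_eq hemb hsupp
  rw [← ht]
  calc ∑' n : ℕ, M (-(n : ℤ))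
      = ∑' n : ℕ, ε * (aseq q n * ((q : ℝ) ^ (-(k : ℤ))) ^ n) := tsum_congr hcomp
    _ = ε * ∑' n : ℕ, aseq q n * ((q : ℝ) ^ (-(k : ℤ))) ^ n := tsum_mul_left
    _ = ε * Fq q ((q : ℝ) ^ (-(k : ℤ))) := rfl
    _ = 0 := by rw [Fq_zero hq0 hq1 k, mul_zero]
/-- Theorem 1 (q-moment indeterminacy): a q-density with heavy tail
f(q^{-j}) ≥ C q^{j(j+1)/2} admits a distinct q-density with the same q-moments. -/
theorem q_moment_indeterminate (q : ℝ) (hq0 : 0 < q) (hq1 : q < 1)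
    (f : ℝ → ℝ) (hf : ∀ t > 0, 0 ≤ f t)
    (hnorm : (1 - q) * ∑' j : ℤ, f (q ^ j) * q ^ j = 1)
    (hmom : ∀ k : ℕ, Summable fun j : ℤ => q ^ (j * (k + 1)) * f (q ^ j))
    (C : ℝ) (hC : 0 < C)
    (hheavy : ∀ j : ℕ, C * q ^ (j * (j + 1) / 2) ≤ f (q ^ (-(j : ℤ)))) :
    ∃ g : ℝ → ℝ, (∀ t > 0, 0 ≤ g t) ∧
      (1 - q) * ∑' j : ℤ, g (q ^ j) * q ^ j = 1 ∧
      (∃ j : ℤ, g (q ^ j) ≠ f (q ^ j)) ∧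
      ∀ k : ℕ, ∑' j : ℤ, q ^ (j * (k + 1)) * g (q ^ j) =
        ∑' j : ℤ, q ^ (j * (k + 1)) * f (q ^ j) := by
  have h1q : (0 : ℝ) < 1 - q := by linarith
  set c : ℝ := Real.exp (-(q / (1 - q) ^ 2)) with hc_def
  have hcpos : 0 < c := Real.exp_pos _
  set ε : ℝ := C * c with hε_def
  have hεpos : 0 < ε := mul_pos hC hcpos
  refine ⟨fun t => f t + pert q ε t, ?_, ?_, ?_, ?_⟩
  · -- nonnegativity
    intro t ht
    show 0 ≤ f t + pert q ε t
    by_cases h : ∃ n : ℕ, t = q ^ (-(n : ℤ))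
    · obtain ⟨n, rfl⟩ := h
      rw [pert_val hq0 hq1 ε n]
      have hheav := hheavy n
      have habs : ε * |aseq q n * q ^ n| ≤ C * q ^ (n * (n + 1) / 2) := by
        have h1 : |aseq q n * q ^ n| = |aseq q n| * q ^ n := by
          rw [abs_mul, abs_of_nonneg (pow_nonneg hq0.le n)]
        have h2 : c * |aseq q n| ≤ Pq q n * |aseq q n| :=
          mul_le_mul_of_nonneg_right (Pq_ge hq0 hq1 n) (abs_nonneg _)
        have h3 : Pq q n * |aseq q n| * q ^ n = q ^ (n * (n + 1) / 2) := by
          rw [mul_comm (Pq q n), aseq_abs_mul_Pq hq0 hq1 n, ← pow_add,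
            ← Finset.sum_range_succ, sum_range_id_succ]
        calc ε * |aseq q n * q ^ n| = C * (c * |aseq q n| * q ^ n) := by
              rw [h1, hε_def]; ring
          _ ≤ C * (Pq q n * |aseq q n| * q ^ n) := by
              apply mul_le_mul_of_nonneg_left _ hC.le
              exact mul_le_mul_of_nonneg_right h2 (pow_nonneg hq0.le n)
          _ = C * q ^ (n * (n + 1) / 2) := by rw [h3]
      have hw : ε * (-|aseq q n * q ^ n|) ≤ ε * (aseq q n * q ^ n) :=
        mul_le_mul_of_nonneg_left (neg_abs_le _) hεpos.le
      have : ε * (-|aseq q n * q ^ n|) = -(ε * |aseq q n * q ^ n|) := by ring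
      rw [this] at hw
      linarith
    · have hz : pert q ε t = 0 := by rw [pert]; exact dif_neg h
      rw [hz, add_zero]
      exact hf t ht
  · -- normalization
    show (1 - q) * ∑' j : ℤ, (f (q ^ j) + pert q ε (q ^ j)) * q ^ j = 1
    have hS0 : Summable (fun j : ℤ => f (q ^ j) * q ^ j) := by
      refine (hmom 0).congr ?_
      intro j
      have he : j * (((0 : ℕ) : ℤ) + 1) = j := by push_cast; ring
      rw [he, mul_comm]
    obtain ⟨hPsum0, hPtsum0⟩ := pert_moment hq0 hq1 ε 0
    have hP0 : Summable (fun j : ℤ => pert q ε (q ^ j) * q ^ j) := by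
      refine hPsum0.congr ?_
      intro j
      have he : j * (((0 : ℕ) : ℤ) + 1) = j := by push_cast; ring
      rw [he, mul_comm]
    have hPt0 : ∑' j : ℤ, pert q ε (q ^ j) * q ^ j = 0 := by
      rw [← hPtsum0]
      refine tsum_congr fun j => ?_
      have he : j * (((0 : ℕ) : ℤ) + 1) = j := by push_cast; ring
      rw [he, mul_comm]
    have hsplit : ∑' j : ℤ, (f (q ^ j) + pert q ε (q ^ j)) * q ^ j
        = ∑' j : ℤ, f (q ^ j) * q ^ j := by
      calc ∑' j : ℤ, (f (q ^ j) + pert q ε (q ^ j)) * q ^ j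
          = ∑' j : ℤ, (f (q ^ j) * q ^ j + pert q ε (q ^ j) * q ^ j) :=
            tsum_congr fun j => by ring
        _ = (∑' j : ℤ, f (q ^ j) * q ^ j) + ∑' j : ℤ, pert q ε (q ^ j) * q ^ j :=
            Summable.tsum_add hS0 hP0
        _ = ∑' j : ℤ, f (q ^ j) * q ^ j := by rw [hPt0, add_zero]
    rw [hsplit]
    exact hnorm
  · -- distinctness at j = 0
    refine ⟨0, ?_⟩
    show f ((q : ℝ) ^ (0 : ℤ)) + pert q ε ((q : ℝ) ^ (0 : ℤ)) ≠ f ((q : ℝ) ^ (0 : ℤ))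
    have h0 : ((q : ℝ) ^ (0 : ℤ)) = (q : ℝ) ^ (-((0 : ℕ) : ℤ)) := by norm_num
    have hp : pert q ε ((q : ℝ) ^ (0 : ℤ)) = ε := by
      rw [h0, pert_val hq0 hq1 ε 0]
      simp [aseq]
    simp only [hp]
    intro hEq
    have : f ((q : ℝ) ^ (0 : ℤ)) + ε = f ((q : ℝ) ^ (0 : ℤ)) := hEq
    linarith
  · -- equality of q-moments
    intro k
    obtain ⟨hPsum, hPtsum⟩ := pert_moment hq0 hq1 ε k
    show ∑' j : ℤ, q ^ (j * ((k : ℤ) + 1)) * (f (q ^ j) + pert q ε (q ^ j))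
        = ∑' j : ℤ, q ^ (j * ((k : ℤ) + 1)) * f (q ^ j)
    calc ∑' j : ℤ, q ^ (j * ((k : ℤ) + 1)) * (f (q ^ j) + pert q ε (q ^ j))
        = ∑' j : ℤ, (q ^ (j * ((k : ℤ) + 1)) * f (q ^ j)
            + q ^ (j * ((k : ℤ) + 1)) * pert q ε (q ^ j)) :=
          tsum_congr fun j => by ring
      _ = (∑' j : ℤ, q ^ (j * ((k : ℤ) + 1)) * f (q ^ j))
            + ∑' j : ℤ, q ^ (j * ((k : ℤ) + 1)) * pert q ε (q ^ j) :=
          Summable.tsum_add (hmom k) hPsum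
      _ = ∑' j : ℤ, q ^ (j * ((k : ℤ) + 1)) * f (q ^ j) := by
          rw [hPtsum, add_zero]
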